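/- Let C ⊆ F_q^n be a code of size M with distance distribution B_i^b(C) = (1/M)|{(u,v) ∈ C² : d_b(u,v) = i}| with respect to the b-symbol distance. Then for every integer 0 ≤ k ≤ n, Σ_{i=0}^{n} B_i^b(C) · K_k^{N,q}(i·q^{b-1}) ≥ 0, where N = (q^b-1)n/(q-1) and K_k^{N,q} is the Krawtchouk polynomial. -/

import Mathlib

open Finset

/-- Cyclic coordinate access: `cget z k` is the coordinate `z_k`, indices taken mod `n`. -/
def cget {Fq : Type*} [Zero Fq] {n : ℕ} (y : Fin n → Fq) (k : ℕ) : Fq :=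
  if h : n = 0 then 0 else y ⟨k % n, Nat.mod_lt k (Nat.pos_of_ne_zero h)⟩

/-- The `b`-symbol weight of a vector `y ∈ Fq^n`. -/
def wtb {Fq : Type*} [Zero Fq] [DecidableEq Fq] {n : ℕ} (b : ℕ) (y : Fin n → Fq) : ℕ :=
  ((Finset.range n).filter fun i => ∃ j : Fin b, cget y (i + j) ≠ 0).card

/-- The `b`-symbol distance on `Fq^n`. -/
def db {Fq : Type*} [Field Fq] [DecidableEq Fq] {n : ℕ} (b : ℕ) (x y : Fin n → Fq) : ℕ :=
  wtb b (x - y)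


set_option linter.unusedSectionVars false
set_option maxHeartbeats 1000000

namespace LPaux

variable {Fq : Type*} [Field Fq] [Fintype Fq] [DecidableEq Fq]

noncomputable def xi (Fq : Type*) [Field Fq] [Fintype Fq] : AddChar Fq ℂ :=
  AddChar.FiniteField.primitiveChar_to_Complex Fq

lemma xi_mul_sum {x : Fq} (hx : x ≠ 0) : ∑ c : Fq, xi Fq (c * x) = 0 := by
  have h := AddChar.sum_mulShift x
    (AddChar.FiniteField.primitiveChar_to_Complex_isPrimitive Fq)
  rw [if_neg hx] at h
  simpa [xi] using h

lemma xi_conj (a : Fq) : (starRingEnd ℂ) (xi Fq a) = xi Fq (-a) := by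
  have h : 0 < ringChar Fq :=
    Nat.pos_of_ne_zero (CharP.ringChar_ne_zero_of_finite Fq)
  rw [AddChar.starComp_apply h, AddChar.inv_apply]

lemma xi_map_sum {ι : Type*} (s : Finset ι) (f : ι → Fq) :
    xi Fq (∑ i ∈ s, f i) = ∏ i ∈ s, xi Fq (f i) := by
  induction s using Finset.cons_induction with
  | empty => simp
  | cons a s ha ih => simp [Finset.sum_cons, Finset.prod_cons, AddChar.map_add_eq_mul, ih]

section Kraw

variable {I : Type*} [Fintype I] [DecidableEq I]

lemma card_subsets_inter (p : I → Prop) [DecidablePred p] {k j : ℕ} (hj : j ≤ k) :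
    ((univ.powersetCard k).filter fun S : Finset I => (S.filter p).card = j).card
      = (univ.filter p).card.choose j * ((univ.filter fun i => ¬ p i).card).choose (k - j) := by
  rw [← Finset.card_powersetCard, ← Finset.card_powersetCard, ← Finset.card_product]
  apply Finset.card_nbij' (i := fun S => (S.filter p, S.filter fun i => ¬ p i))
    (j := fun P => P.1 ∪ P.2)
  · intro S hS
    simp only [Finset.mem_coe, mem_filter, Finset.mem_powersetCard] at hS ⊢
    obtain ⟨⟨hSu, hSk⟩, hSj⟩ := hS
    have hadd := Finset.card_filter_add_card_filter_not (s := S) (p := p)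
    simp only [Finset.mem_product, Finset.mem_powersetCard]
    refine ⟨⟨fun i hi => ?_, hSj⟩, fun i hi => ?_, ?_⟩
    · simp only [mem_filter] at hi ⊢; exact ⟨Finset.mem_univ _, hi.2⟩
    · simp only [mem_filter] at hi ⊢; exact ⟨Finset.mem_univ _, hi.2⟩
    · omega
  · intro P hP
    simp only [Finset.mem_coe, Finset.mem_product, Finset.mem_powersetCard] at hP
    obtain ⟨⟨hP1, hP1c⟩, hP2, hP2c⟩ := hP
    have h1 : (P.1 ∪ P.2).filter p = P.1 := by
      rw [Finset.filter_union]
      have e1 : P.1.filter p = P.1 := Finset.filter_eq_self.2 fun i hi =>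
        (Finset.mem_filter.1 (hP1 hi)).2
      have e2 : P.2.filter p = ∅ := Finset.filter_eq_empty_iff.2 fun {i} hi =>
        (Finset.mem_filter.1 (hP2 hi)).2
      rw [e1, e2, Finset.union_empty]
    have h2 : (P.1 ∪ P.2).filter (fun i => ¬ p i) = P.2 := by
      rw [Finset.filter_union]
      have e1 : P.1.filter (fun i => ¬ p i) = ∅ := Finset.filter_eq_empty_iff.2 fun {i} hi h =>
        h (Finset.mem_filter.1 (hP1 hi)).2
      have e2 : P.2.filter (fun i => ¬ p i) = P.2 := Finset.filter_eq_self.2 fun i hi =>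
        (Finset.mem_filter.1 (hP2 hi)).2
      rw [e1, e2, Finset.empty_union]
    simp only [Finset.mem_coe, mem_filter, Finset.mem_powersetCard]
    have hcard := Finset.card_filter_add_card_filter_not (s := P.1 ∪ P.2) (p := p)
    refine ⟨⟨Finset.subset_univ _, ?_⟩, by rw [h1, hP1c]⟩
    rw [h1, h2] at hcard
    omega
  · intro S hS
    exact Finset.filter_union_filter_not_eq p S
  · intro P hP
    simp only [Finset.mem_coe, Finset.mem_product, Finset.mem_powersetCard] at hP
    obtain ⟨⟨hP1, hP1c⟩, hP2, hP2c⟩ := hP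
    have e1 : P.1.filter p = P.1 := Finset.filter_eq_self.2 fun i hi =>
      (Finset.mem_filter.1 (hP1 hi)).2
    have e2 : P.2.filter p = ∅ := Finset.filter_eq_empty_iff.2 fun {i} hi =>
      (Finset.mem_filter.1 (hP2 hi)).2
    have e3 : P.1.filter (fun i => ¬ p i) = ∅ := Finset.filter_eq_empty_iff.2 fun {i} hi h =>
      h (Finset.mem_filter.1 (hP1 hi)).2
    have e4 : P.2.filter (fun i => ¬ p i) = P.2 := Finset.filter_eq_self.2 fun i hi =>
      (Finset.mem_filter.1 (hP2 hi)).2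
    ext <;> simp [Finset.filter_union, e1, e2, e3, e4]

theorem char_sum_kraw (k : ℕ) (x : I → Fq) :
    ∑ v ∈ univ.filter (fun v : I → Fq => (univ.filter fun i => v i ≠ 0).card = k),
        xi Fq (∑ i, v i * x i)
      = ∑ j ∈ Finset.range (k + 1),
          (-1 : ℂ) ^ j * ((Fintype.card Fq - 1 : ℕ) : ℂ) ^ (k - j)
            * ((univ.filter fun i => x i ≠ 0).card.choose j : ℂ)
            * ((Fintype.card I - (univ.filter fun i => x i ≠ 0).card).choose (k - j) : ℂ) := by
  classical
  set q := Fintype.card Fq with hq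
  have hmaps : ∀ v ∈ univ.filter (fun v : I → Fq => (univ.filter fun i => v i ≠ 0).card = k),
      (univ.filter fun i => v i ≠ 0) ∈ univ.powersetCard k := by
    intro v hv
    simp only [mem_filter] at hv
    exact Finset.mem_powersetCard.2 ⟨Finset.subset_univ _, hv.2⟩
  rw [← Finset.sum_fiberwise_of_maps_to hmaps]
  have hfiber : ∀ S ∈ univ.powersetCard k,
      (univ.filter (fun v : I → Fq => (univ.filter fun i => v i ≠ 0).card = k)).filter
          (fun v => (univ.filter fun i => v i ≠ 0) = S)
        = Fintype.piFinset (fun i => if i ∈ S then univ.filter (· ≠ (0:Fq)) else {0}) := by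
    intro S hS
    obtain ⟨-, hSk⟩ := Finset.mem_powersetCard.1 hS
    ext v
    simp only [mem_filter, Fintype.mem_piFinset, Finset.mem_univ, true_and]
    constructor
    · rintro ⟨-, hsupp⟩ i
      by_cases hi : i ∈ S <;> simp only [hi, if_true, if_false, mem_filter, Finset.mem_singleton]
      · refine ⟨Finset.mem_univ _, ?_⟩
        have := hsupp ▸ hi
        simpa using (Finset.mem_filter.1 this).2
      · by_contra h
        exact hi (hsupp ▸ (Finset.mem_filter.2 ⟨Finset.mem_univ _, h⟩))
    · intro h
      have hsupp : (univ.filter fun i => v i ≠ 0) = S := by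
        ext i
        simp only [mem_filter, Finset.mem_univ, true_and]
        have hv := h i
        by_cases hi : i ∈ S
        · simp only [hi, if_true, mem_filter, Finset.mem_univ, true_and] at hv
          simp [hi, hv]
        · simp only [hi, if_false, Finset.mem_singleton] at hv
          simp [hi, hv]
      exact ⟨by rw [hsupp, hSk], hsupp⟩
  calc ∑ S ∈ univ.powersetCard k,
        ∑ v ∈ (univ.filter (fun v : I → Fq => (univ.filter fun i => v i ≠ 0).card = k)).filter
          (fun v => (univ.filter fun i => v i ≠ 0) = S), xi Fq (∑ i, v i * x i)
      = ∑ S ∈ univ.powersetCard k,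
          (-1 : ℂ) ^ (S.filter fun i => x i ≠ 0).card
            * ((q - 1 : ℕ) : ℂ) ^ (k - (S.filter fun i => x i ≠ 0).card) := by
        refine Finset.sum_congr rfl fun S hS => ?_
        obtain ⟨-, hSk⟩ := Finset.mem_powersetCard.1 hS
        rw [hfiber S hS]
        have h1 : ∀ v ∈ Fintype.piFinset
            (fun i => if i ∈ S then univ.filter (· ≠ (0:Fq)) else {0}),
            xi Fq (∑ i, v i * x i) = ∏ i, xi Fq (v i * x i) := fun v _ => xi_map_sum _ _
        have h2 := Finset.prod_univ_sum
          (t := fun i => if i ∈ S then univ.filter (· ≠ (0:Fq)) else {0})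
          (f := fun i c => xi Fq (c * x i))
        rw [Finset.sum_congr rfl h1, ← h2]
        have hfac : ∀ i : I, (∑ c ∈ (if i ∈ S then univ.filter (· ≠ (0:Fq)) else {0}),
            xi Fq (c * x i))
            = if i ∈ S then (if x i = 0 then ((q - 1 : ℕ) : ℂ) else -1) else 1 := by
          intro i
          by_cases hi : i ∈ S <;> simp only [hi, if_true, if_false]
          · by_cases hx : x i = 0
            · simp only [hx, mul_zero, AddChar.map_zero_eq_one, Finset.sum_const, if_true]
              rw [Finset.filter_ne', Finset.card_erase_of_mem (Finset.mem_univ _)]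
              simp [hq]
            · simp only [hx, if_false]
              have he : univ.filter (· ≠ (0:Fq)) = Finset.univ.erase 0 := Finset.filter_ne' _ _
              rw [he, Finset.sum_erase_eq_sub (Finset.mem_univ _), xi_mul_sum hx]
              simp
          · simp
        rw [Finset.prod_congr rfl fun i _ => hfac i]
        rw [← Finset.prod_subset (Finset.subset_univ S) (by intro i _ hi; simp [hi])]
        have h3 : ∀ i ∈ S, (if i ∈ S then (if x i = 0 then ((q - 1 : ℕ) : ℂ) else -1) else 1)
            = if x i = 0 then ((q - 1 : ℕ) : ℂ) else -1 := by intro i hi; simp [hi]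
        rw [Finset.prod_congr rfl h3, Finset.prod_ite, Finset.prod_const, Finset.prod_const]
        have hsplit : (S.filter fun i => x i = 0).card
            = k - (S.filter fun i => x i ≠ 0).card := by
          have h4 := Finset.card_filter_add_card_filter_not (s := S)
            (p := fun i => x i = 0)
          simp only [hSk] at h4
          have h5 : (S.filter fun i => ¬ x i = 0) = (S.filter fun i => x i ≠ 0) := rfl
          rw [h5] at h4
          omega
        rw [hsplit, mul_comm]
    _ = _ := by
        have hmaps2 : ∀ S ∈ univ.powersetCard k,
            (S.filter fun i => x i ≠ 0).card ∈ Finset.range (k + 1) := by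
          intro S hS
          obtain ⟨-, hSk⟩ := Finset.mem_powersetCard.1 hS
          rw [Finset.mem_range, Nat.lt_succ_iff, ← hSk]
          exact Finset.card_filter_le _ _
        rw [← Finset.sum_fiberwise_of_maps_to hmaps2]
        refine Finset.sum_congr rfl fun j hj => ?_
        rw [Finset.mem_range, Nat.lt_succ_iff] at hj
        rw [Finset.sum_congr rfl (fun S hS => by
          rw [(Finset.mem_filter.1 hS).2]), Finset.sum_const,
          card_subsets_inter (fun i => x i ≠ 0) hj]
        have h6 : (univ.filter fun i => ¬ x i ≠ 0).card
            = Fintype.card I - (univ.filter fun i => x i ≠ 0).card := by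
          have h7 := Finset.card_filter_add_card_filter_not (s := (univ : Finset I))
            (p := fun i => x i ≠ 0)
          simp only [Finset.card_univ] at h7
          omega
        rw [h6, nsmul_eq_mul]
        push_cast
        ring

end Kraw



section Geom

variable {b : ℕ}

def dotp (r s : Fin b → Fq) : Fq := ∑ j, r j * s j

lemma dotp_zero_right (r : Fin b → Fq) : dotp r 0 = 0 := by simp [dotp]

lemma dotp_zero_left (s : Fin b → Fq) : dotp 0 s = 0 := by simp [dotp]

lemma dotp_smul_left (c : Fq) (r s : Fin b → Fq) : dotp (c • r) s = c * dotp r s := by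
  simp [dotp, Finset.mul_sum, mul_assoc]

lemma dotp_sub_right (r s t : Fin b → Fq) : dotp r (s - t) = dotp r s - dotp r t := by
  simp [dotp, mul_sub, Finset.sum_sub_distrib]

lemma dotp_add_left (r r' s : Fin b → Fq) : dotp (r + r') s = dotp r s + dotp r' s := by
  simp [dotp, add_mul, Finset.sum_add_distrib]

lemma dotp_sub_left (r r' s : Fin b → Fq) : dotp (r - r') s = dotp r s - dotp r' s := by
  simp [dotp, sub_mul, Finset.sum_sub_distrib]

lemma dotp_single (j0 : Fin b) (c : Fq) (s : Fin b → Fq) :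
    dotp (Pi.single j0 c) s = c * s j0 := by
  unfold dotp
  rw [Finset.sum_eq_single j0]
  · simp
  · intro j _ hj; simp [Pi.single_eq_of_ne hj]
  · simp

/-- the position of the leading (first nonzero) coordinate -/
def lead (hb : 0 < b) (t : Fin b → Fq) : Fin b :=
  if h : (univ.filter fun j => t j ≠ 0).Nonempty then (univ.filter fun j => t j ≠ 0).min' h
  else ⟨0, hb⟩

lemma lead_spec (hb : 0 < b) {t : Fin b → Fq} (h : ∃ j, t j ≠ 0) : t (lead hb t) ≠ 0 := by
  obtain ⟨j, hj⟩ := h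
  have hne : (univ.filter fun j => t j ≠ 0).Nonempty :=
    ⟨j, Finset.mem_filter.2 ⟨Finset.mem_univ _, hj⟩⟩
  rw [lead, dif_pos hne]
  exact (Finset.mem_filter.1 (Finset.min'_mem _ hne)).2

lemma lead_smul (hb : 0 < b) {c : Fq} (hc : c ≠ 0) (t : Fin b → Fq) :
    lead hb (c • t) = lead hb t := by
  have hset : (univ.filter fun j => (c • t) j ≠ 0) = (univ.filter fun j => t j ≠ 0) := by
    ext j; simp [hc]
  unfold lead
  rw [hset]

/-- representatives of projective points: vectors with leading coordinate 1 -/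
def Rset (Fq : Type*) [Field Fq] [Fintype Fq] [DecidableEq Fq] {b : ℕ} (hb : 0 < b) :
    Finset (Fin b → Fq) :=
  univ.filter fun r => (∃ j, r j ≠ 0) ∧ r (lead hb r) = 1

lemma transversal (hb : 0 < b) (P : (Fin b → Fq) → Prop) [DecidablePred P]
    (hP : ∀ (c : Fq), c ≠ 0 → ∀ t, P (c • t) ↔ P t) :
    ((Rset Fq hb).filter P).card * (Fintype.card Fq - 1)
      = (univ.filter fun t : Fin b → Fq => (∃ j, t j ≠ 0) ∧ P t).card := by
  classical
  rw [← Fintype.card_units (α := Fq), ← Finset.card_univ (α := Fqˣ), ← Finset.card_product]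
  apply Finset.card_nbij' (i := fun p : (Fin b → Fq) × Fqˣ => (p.2 : Fq) • p.1)
    (j := fun t : Fin b → Fq => ((t (lead hb t))⁻¹ • t,
      if h : t (lead hb t) = 0 then (1 : Fqˣ) else Units.mk0 _ h))
  · rintro ⟨r, c⟩ hrc
    simp only [Finset.mem_coe, Finset.mem_product, mem_filter, Rset] at hrc
    obtain ⟨⟨⟨-, hex, hlead⟩, hPr⟩, -⟩ := hrc
    have hc : (c : Fq) ≠ 0 := c.ne_zero
    simp only [Finset.mem_coe, mem_filter, Finset.mem_univ, true_and]
    constructor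
    · exact ⟨lead hb r, by simp [Pi.smul_apply, hlead, hc]⟩
    · exact (hP _ hc r).2 hPr
  · intro t ht
    simp only [Finset.mem_coe, mem_filter, Finset.mem_univ, true_and] at ht
    obtain ⟨hex, hPt⟩ := ht
    have hne := lead_spec hb hex
    have hinv : (t (lead hb t))⁻¹ ≠ 0 := inv_ne_zero hne
    simp only [Finset.mem_coe, Finset.mem_product, mem_filter, Rset, Finset.mem_univ, true_and, and_true]
    refine ⟨⟨⟨lead hb t, by simp [Pi.smul_apply, hinv, hne]⟩, ?_⟩, ?_⟩
    · rw [lead_smul hb hinv]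
      simp [Pi.smul_apply, inv_mul_cancel₀ hne]
    · exact (hP _ hinv t).2 hPt
  · rintro ⟨r, c⟩ hrc
    simp only [Finset.mem_coe, Finset.mem_product, mem_filter, Rset] at hrc
    obtain ⟨⟨⟨-, hex, hlead⟩, hPr⟩, -⟩ := hrc
    have hc : (c : Fq) ≠ 0 := c.ne_zero
    have h1 : lead hb ((c : Fq) • r) = lead hb r := lead_smul hb hc r
    have h2 : ((c : Fq) • r) (lead hb ((c : Fq) • r)) = (c : Fq) := by
      rw [h1]; simp [Pi.smul_apply, hlead]
    have hcc : ((c : Fq) • r) (lead hb ((c : Fq) • r)) ≠ 0 := by rw [h2]; exact hc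
    have h3 : (((c : Fq) • r) (lead hb ((c : Fq) • r)))⁻¹ • ((c : Fq) • r) = r := by
      rw [h2, smul_smul, inv_mul_cancel₀ hc, one_smul]
    dsimp only; rw [dif_neg hcc]
    simp only [Prod.mk.injEq]
    exact ⟨h3, Units.ext (by simp [h2])⟩
  · intro t ht
    simp only [Finset.mem_coe, mem_filter, Finset.mem_univ, true_and] at ht
    obtain ⟨hex, hPt⟩ := ht
    have hne := lead_spec hb hex
    dsimp only; rw [dif_neg hne]
    simp [smul_smul, mul_inv_cancel₀ hne]

lemma card_nonzero_vectors (hb : 0 < b) :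
    (univ.filter fun t : Fin b → Fq => ∃ j, t j ≠ 0).card
      = Fintype.card Fq ^ b - 1 := by
  have hset : (univ.filter fun t : Fin b → Fq => ∃ j, t j ≠ 0)
      = univ.erase 0 := by
    rw [← Finset.filter_ne']
    ext t
    simp [Function.ne_iff]
  rw [hset, Finset.card_erase_of_mem (Finset.mem_univ _), Finset.card_univ]
  simp

lemma Rset_card (hb : 0 < b) :
    (Rset Fq hb).card * (Fintype.card Fq - 1) = Fintype.card Fq ^ b - 1 := by
  have h := transversal (Fq := Fq) hb (fun _ => True) (by simp)
  simpa [card_nonzero_vectors hb] using h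

lemma fiber_card (hb : 0 < b) {s : Fin b → Fq} (hs : ∃ j0, s j0 ≠ 0) (a : Fq) :
    (univ.filter fun t : Fin b → Fq => dotp t s = a).card
      = (univ.filter fun t : Fin b → Fq => dotp t s = 0).card := by
  obtain ⟨j0, hj0⟩ := hs
  apply Finset.card_nbij' (i := fun t => t - Pi.single j0 (a * (s j0)⁻¹))
    (j := fun t => t + Pi.single j0 (a * (s j0)⁻¹))
  · intro t ht
    simp only [Finset.mem_coe, mem_filter, Finset.mem_univ, true_and] at ht ⊢
    rw [dotp_sub_left, dotp_single, ht]
    field_simp; ring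
  · intro t ht
    simp only [Finset.mem_coe, mem_filter, Finset.mem_univ, true_and] at ht ⊢
    rw [dotp_add_left, dotp_single, ht]
    field_simp; ring
  · intro t _; simp
  · intro t _; simp

lemma card_dotp_ne (hb : 0 < b) {s : Fin b → Fq} (hs : ∃ j0, s j0 ≠ 0) :
    (univ.filter fun t : Fin b → Fq => dotp t s ≠ 0).card
      = Fintype.card Fq ^ b - Fintype.card Fq ^ (b - 1) := by
  classical
  set q := Fintype.card Fq with hq
  have hqpos : 0 < q := Fintype.card_pos
  have htot : (univ : Finset (Fin b → Fq)).card = q ^ b := by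
    rw [Finset.card_univ]; simp [hq]
  have hconst : ∀ a ∈ (univ : Finset Fq),
      (univ.filter fun t : Fin b → Fq => dotp t s = a).card
        = (univ.filter fun t : Fin b → Fq => dotp t s = 0).card :=
    fun a _ => fiber_card hb hs a
  have hfib : q ^ b = q * (univ.filter fun t : Fin b → Fq => dotp t s = 0).card := by
    calc q ^ b = (univ : Finset (Fin b → Fq)).card := htot.symm
      _ = ∑ a ∈ (univ : Finset Fq), (univ.filter fun t : Fin b → Fq => dotp t s = a).card :=
          Finset.card_eq_sum_card_fiberwise (fun t _ => Finset.mem_univ _)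
      _ = ∑ _a ∈ (univ : Finset Fq),
            (univ.filter fun t : Fin b → Fq => dotp t s = 0).card :=
          Finset.sum_congr rfl hconst
      _ = q * (univ.filter fun t : Fin b → Fq => dotp t s = 0).card := by
          rw [Finset.sum_const, Finset.card_univ, smul_eq_mul]
  have hpow : q ^ b = q ^ (b - 1) * q := by
    rw [← pow_succ]; congr 1; omega
  have hfib0 : (univ.filter fun t : Fin b → Fq => dotp t s = 0).card = q ^ (b - 1) := by
    have h9 : q * (univ.filter fun t : Fin b → Fq => dotp t s = 0).card = q * q ^ (b-1) := by
      rw [← hfib, hpow, Nat.mul_comm]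
    exact Nat.eq_of_mul_eq_mul_left hqpos h9
  have hsplit := Finset.card_filter_add_card_filter_not
    (s := (univ : Finset (Fin b → Fq))) (p := fun t => dotp t s = 0)
  have hfilterne : (univ.filter fun t : Fin b → Fq => ¬ dotp t s = 0)
      = (univ.filter fun t : Fin b → Fq => dotp t s ≠ 0) := rfl
  rw [hfilterne, htot, hfib0] at hsplit
  omega

lemma Rset_count (hb : 0 < b) {s : Fin b → Fq} (hs : ∃ j0, s j0 ≠ 0) :
    ((Rset Fq hb).filter fun r => dotp r s ≠ 0).card = Fintype.card Fq ^ (b - 1) := by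
  classical
  set q := Fintype.card Fq with hq
  have hq2 : 2 ≤ q := Fintype.one_lt_card
  have h := transversal (Fq := Fq) hb (fun t => dotp t s ≠ 0)
    (fun c hc t => by
      show dotp (c • t) s ≠ 0 ↔ dotp t s ≠ 0
      rw [dotp_smul_left]; simp [hc])
  have hset : (univ.filter fun t : Fin b → Fq => (∃ j, t j ≠ 0) ∧ dotp t s ≠ 0)
      = (univ.filter fun t : Fin b → Fq => dotp t s ≠ 0) := by
    ext t
    simp only [mem_filter, Finset.mem_univ, true_and, and_iff_right_iff_imp]
    intro hd
    by_contra hcon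
    push_neg at hcon
    have : t = 0 := funext fun j => hcon j
    rw [this, dotp_zero_left] at hd
    exact hd rfl
  rw [hset, card_dotp_ne hb hs] at h
  have hpow : q ^ b = q ^ (b - 1) * q := by
    rw [← pow_succ]; congr 1; omega
  have hrhs : q ^ b - q ^ (b - 1) = q ^ (b - 1) * (q - 1) := by
    rw [Nat.mul_sub, hpow]; omega
  rw [hrhs] at h
  exact Nat.eq_of_mul_eq_mul_right (by omega) h

end Geom

section Main

variable {n : ℕ} {b : ℕ}

lemma cget_sub (u v : Fin n → Fq) (m : ℕ) : cget (u - v) m = cget u m - cget v m := by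
  unfold cget
  split
  · simp
  · simp [Pi.sub_apply]

def symb (b : ℕ) (u : Fin n → Fq) (i : ℕ) : Fin b → Fq := fun j => cget u (i + ↑j)

lemma symb_sub (u v : Fin n → Fq) (i : ℕ) :
    symb b (u - v) i = symb b u i - symb b v i :=
  funext fun j => by simp [symb, cget_sub]

def phi (hb : 0 < b) (u : Fin n → Fq) : (Fin n × {r // r ∈ Rset Fq hb}) → Fq :=
  fun p => dotp p.2.1 (symb b u ↑p.1)

lemma phi_sub (hb : 0 < b) (u v : Fin n → Fq) :
    phi hb (u - v) = phi hb u - phi hb v :=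
  funext fun p => by simp [phi, symb_sub, dotp_sub_right]

lemma phi_wt (hb : 0 < b) (u : Fin n → Fq) :
    (univ.filter fun p : Fin n × {r // r ∈ Rset Fq hb} => phi hb u p ≠ 0).card
      = wtb b u * Fintype.card Fq ^ (b - 1) := by
  rw [Finset.card_filter, Fintype.sum_prod_type]
  have hinner : ∀ i : Fin n,
      (∑ r : {r // r ∈ Rset Fq hb}, if phi hb u (i, r) ≠ 0 then 1 else 0)
        = if (∃ j : Fin b, cget u (↑i + ↑j) ≠ 0) then Fintype.card Fq ^ (b - 1) else 0 := by
    intro i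
    have h0 : (∑ r : {r // r ∈ Rset Fq hb}, if phi hb u (i, r) ≠ 0 then 1 else 0)
        = ((Rset Fq hb).filter fun r => dotp r (symb b u ↑i) ≠ 0).card := by
      rw [Finset.card_filter]
      exact Finset.sum_coe_sort (Rset Fq hb)
        (fun r => if dotp r (symb b u ↑i) ≠ 0 then 1 else 0)
    rw [h0]
    by_cases hex : ∃ j : Fin b, cget u (↑i + ↑j) ≠ 0
    · rw [if_pos hex]
      apply Rset_count hb
      obtain ⟨j, hj⟩ := hex
      exact ⟨j, by simpa [symb] using hj⟩
    · rw [if_neg hex]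
      rw [Finset.card_eq_zero, Finset.filter_eq_empty_iff]
      intro r hr
      push_neg at hex ⊢
      have hsymb : symb b u ↑i = 0 := funext fun j => by simpa [symb] using hex j
      rw [hsymb, dotp_zero_right]
  rw [Finset.sum_congr rfl fun i _ => hinner i]
  rw [Fin.sum_univ_eq_sum_range
    (fun m => if (∃ j : Fin b, cget u (m + ↑j) ≠ 0) then Fintype.card Fq ^ (b - 1) else 0)]
  rw [← Finset.sum_filter, Finset.sum_const, smul_eq_mul]
  rfl

lemma core_pos (hb : 0 < b) (k : ℕ) (C : Finset (Fin n → Fq)) :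
    0 ≤ ∑ p ∈ C ×ˢ C, ∑ j ∈ Finset.range (k + 1),
        (-1 : ℝ) ^ j * ((Fintype.card Fq - 1 : ℕ) : ℝ) ^ (k - j)
          * ((db b p.1 p.2 * Fintype.card Fq ^ (b - 1)).choose j : ℝ)
          * ((n * (Rset Fq hb).card - db b p.1 p.2 * Fintype.card Fq ^ (b - 1)).choose
              (k - j) : ℝ) := by
  have hcardI : Fintype.card (Fin n × {r // r ∈ Rset Fq hb})
      = n * (Rset Fq hb).card := by
    simp [Fintype.card_prod, Fintype.card_coe]
  have hw : ∀ p : (Fin n → Fq) × (Fin n → Fq),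
      (univ.filter fun i : Fin n × {r // r ∈ Rset Fq hb}
          => (phi hb p.1 - phi hb p.2) i ≠ 0).card
        = db b p.1 p.2 * Fintype.card Fq ^ (b - 1) := by
    intro p
    rw [← phi_sub hb]
    exact phi_wt hb (p.1 - p.2)
  have hkraw : ∀ p : (Fin n → Fq) × (Fin n → Fq),
      (∑ j ∈ Finset.range (k + 1),
        (-1 : ℂ) ^ j * ((Fintype.card Fq - 1 : ℕ) : ℂ) ^ (k - j)
          * ((db b p.1 p.2 * Fintype.card Fq ^ (b - 1)).choose j : ℂ)
          * ((n * (Rset Fq hb).card - db b p.1 p.2 * Fintype.card Fq ^ (b - 1)).choose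
              (k - j) : ℂ))
      = ∑ V ∈ univ.filter (fun V : Fin n × {r // r ∈ Rset Fq hb} → Fq
            => (univ.filter fun i => V i ≠ 0).card = k),
          xi Fq (∑ i, V i * (phi hb p.1 - phi hb p.2) i) := by
    intro p
    rw [char_sum_kraw k (phi hb p.1 - phi hb p.2), hw p, hcardI]
  have hsplit : ∀ (V : Fin n × {r // r ∈ Rset Fq hb} → Fq)
      (p : (Fin n → Fq) × (Fin n → Fq)),
      xi Fq (∑ i, V i * (phi hb p.1 - phi hb p.2) i)
        = xi Fq (∑ i, phi hb p.1 i * V i)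
          * (starRingEnd ℂ) (xi Fq (∑ i, phi hb p.2 i * V i)) := by
    intro V p
    have h1 : ∑ i, V i * (phi hb p.1 - phi hb p.2) i
        = (∑ i, phi hb p.1 i * V i) + -(∑ i, phi hb p.2 i * V i) := by
      have h2 : ∀ i : Fin n × {r // r ∈ Rset Fq hb}, V i * (phi hb p.1 - phi hb p.2) i
          = phi hb p.1 i * V i + -(phi hb p.2 i * V i) := by
        intro i; simp only [Pi.sub_apply]; ring
      rw [Finset.sum_congr rfl fun i _ => h2 i, Finset.sum_add_distrib]
      congr 1
      rw [Finset.sum_neg_distrib]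
    rw [h1, AddChar.map_add_eq_mul, xi_conj]
  have hC2 : ((∑ p ∈ C ×ˢ C, ∑ j ∈ Finset.range (k + 1),
        (-1 : ℝ) ^ j * ((Fintype.card Fq - 1 : ℕ) : ℝ) ^ (k - j)
          * ((db b p.1 p.2 * Fintype.card Fq ^ (b - 1)).choose j : ℝ)
          * ((n * (Rset Fq hb).card - db b p.1 p.2 * Fintype.card Fq ^ (b - 1)).choose
              (k - j) : ℝ) : ℝ) : ℂ)
      = ((∑ V ∈ univ.filter (fun V : Fin n × {r // r ∈ Rset Fq hb} → Fq
            => (univ.filter fun i => V i ≠ 0).card = k),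
          Complex.normSq (∑ u ∈ C, xi Fq (∑ i, phi hb u i * V i)) : ℝ) : ℂ) := by
    push_cast
    calc ∑ p ∈ C ×ˢ C, ∑ j ∈ Finset.range (k + 1),
        (-1 : ℂ) ^ j * ((Fintype.card Fq - 1 : ℕ) : ℂ) ^ (k - j)
          * ((db b p.1 p.2 * Fintype.card Fq ^ (b - 1)).choose j : ℂ)
          * ((n * (Rset Fq hb).card - db b p.1 p.2 * Fintype.card Fq ^ (b - 1)).choose
              (k - j) : ℂ)
        = ∑ p ∈ C ×ˢ C, ∑ V ∈ univ.filter
            (fun V : Fin n × {r // r ∈ Rset Fq hb} → Fq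
              => (univ.filter fun i => V i ≠ 0).card = k),
            xi Fq (∑ i, V i * (phi hb p.1 - phi hb p.2) i) :=
          Finset.sum_congr rfl fun p _ => hkraw p
      _ = ∑ V ∈ univ.filter (fun V : Fin n × {r // r ∈ Rset Fq hb} → Fq
              => (univ.filter fun i => V i ≠ 0).card = k),
            ∑ p ∈ C ×ˢ C, xi Fq (∑ i, V i * (phi hb p.1 - phi hb p.2) i) :=
          Finset.sum_comm
      _ = ∑ V ∈ univ.filter (fun V : Fin n × {r // r ∈ Rset Fq hb} → Fq
              => (univ.filter fun i => V i ≠ 0).card = k),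
            ((Complex.normSq (∑ u ∈ C, xi Fq (∑ i, phi hb u i * V i)) : ℝ) : ℂ) := by
          refine Finset.sum_congr rfl fun V _ => ?_
          calc ∑ p ∈ C ×ˢ C,
                xi Fq (∑ i, V i * (phi hb p.1 - phi hb p.2) i)
              = ∑ u ∈ C, ∑ u' ∈ C, xi Fq (∑ i, phi hb u i * V i)
                  * (starRingEnd ℂ) (xi Fq (∑ i, phi hb u' i * V i)) := by
                rw [Finset.sum_congr rfl fun p _ => hsplit V p, Finset.sum_product]
            _ = (∑ u ∈ C, xi Fq (∑ i, phi hb u i * V i))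
                  * ∑ u' ∈ C, (starRingEnd ℂ) (xi Fq (∑ i, phi hb u' i * V i)) :=
                (Finset.sum_mul_sum C C _ _).symm
            _ = (∑ u ∈ C, xi Fq (∑ i, phi hb u i * V i))
                  * (starRingEnd ℂ) (∑ u' ∈ C, xi Fq (∑ i, phi hb u' i * V i)) := by
                rw [map_sum]
            _ = ↑(Complex.normSq (∑ u ∈ C, xi Fq (∑ i, phi hb u i * V i))) :=
                Complex.mul_conj _
  have hreal := Complex.ofReal_inj.1 hC2
  rw [hreal]
  apply Finset.sum_nonneg
  intro V _
  exact Complex.normSq_nonneg _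

end Main

end LPaux

/-- Lemma 5.5: for a code `C ⊆ Fq^n` with `b`-symbol distance distribution
`B_i = |{(u,v) ∈ C² : d_b(u,v) = i}| / |C|`, one has
`Σ_{i=0}^{n} B_i · K_k^{N,q}(i·q^{b-1}) ≥ 0` for all `0 ≤ k ≤ n`,
where `N = (q^b-1)n/(q-1)`. -/
theorem lp_positivity {Fq : Type*} [Field Fq] [Fintype Fq] [DecidableEq Fq]
    {n b k : ℕ} (hb1 : 1 ≤ b) (hbn : b ≤ n) (hk : k ≤ n)
    (C : Finset (Fin n → Fq)) (hC : C.Nonempty) :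
    0 ≤ ∑ i ∈ Finset.range (n + 1),
        (((C ×ˢ C).filter fun p => db b p.1 p.2 = i).card : ℝ) / (C.card : ℝ) *
          ∑ j ∈ Finset.range (k + 1),
            (-1 : ℝ) ^ j * ((Fintype.card Fq : ℝ) - 1) ^ (k - j) *
              ((i * Fintype.card Fq ^ (b - 1)).choose j : ℝ) *
              (((Fintype.card Fq ^ b - 1) * n / (Fintype.card Fq - 1)
                  - i * Fintype.card Fq ^ (b - 1)).choose (k - j) : ℝ) := by
  have hb : 0 < b := hb1
  have hq1 : 1 ≤ Fintype.card Fq := Fintype.card_pos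
  have hq2 : 2 ≤ Fintype.card Fq := Fintype.one_lt_card
  have hR := LPaux.Rset_card (Fq := Fq) hb
  have hN : (Fintype.card Fq ^ b - 1) * n / (Fintype.card Fq - 1)
      = n * (LPaux.Rset Fq hb).card := by
    rw [← hR, Nat.mul_right_comm, Nat.mul_div_cancel _ (by omega), Nat.mul_comm]
  have hc1 : ((Fintype.card Fq : ℝ) - 1) = ((Fintype.card Fq - 1 : ℕ) : ℝ) := by
    rw [Nat.cast_sub hq1, Nat.cast_one]
  rw [hc1]
  simp only [hN]
  simp only [div_mul_eq_mul_div]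
  rw [← Finset.sum_div]
  apply div_nonneg _ (Nat.cast_nonneg _)
  have hmaps : ∀ p ∈ C ×ˢ C, db b p.1 p.2 ∈ Finset.range (n + 1) := by
    intro p _
    rw [Finset.mem_range, Nat.lt_succ_iff]
    unfold db wtb
    exact (Finset.card_filter_le _ _).trans (Finset.card_range n).le
  have hfib := Finset.sum_fiberwise_of_maps_to hmaps
    (fun p => ∑ j ∈ Finset.range (k + 1),
      (-1 : ℝ) ^ j * ((Fintype.card Fq - 1 : ℕ) : ℝ) ^ (k - j)
        * ((db b p.1 p.2 * Fintype.card Fq ^ (b - 1)).choose j : ℝ)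
        * ((n * (LPaux.Rset Fq hb).card
            - db b p.1 p.2 * Fintype.card Fq ^ (b - 1)).choose (k - j) : ℝ))
  have htrans : ∀ i ∈ Finset.range (n + 1),
      (∑ p ∈ (C ×ˢ C).filter (fun p => db b p.1 p.2 = i),
        ∑ j ∈ Finset.range (k + 1),
          (-1 : ℝ) ^ j * ((Fintype.card Fq - 1 : ℕ) : ℝ) ^ (k - j)
            * ((db b p.1 p.2 * Fintype.card Fq ^ (b - 1)).choose j : ℝ)
            * ((n * (LPaux.Rset Fq hb).card
                - db b p.1 p.2 * Fintype.card Fq ^ (b - 1)).choose (k - j) : ℝ))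
      = (((C ×ˢ C).filter fun p => db b p.1 p.2 = i).card : ℝ)
          * (∑ j ∈ Finset.range (k + 1),
              (-1 : ℝ) ^ j * ((Fintype.card Fq - 1 : ℕ) : ℝ) ^ (k - j)
                * ((i * Fintype.card Fq ^ (b - 1)).choose j : ℝ)
                * ((n * (LPaux.Rset Fq hb).card
                    - i * Fintype.card Fq ^ (b - 1)).choose (k - j) : ℝ)) := by
    intro i _
    rw [Finset.sum_congr rfl (fun p hp => by
      rw [(Finset.mem_filter.1 hp).2] :
        ∀ p ∈ (C ×ˢ C).filter (fun p => db b p.1 p.2 = i),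
          (∑ j ∈ Finset.range (k + 1),
            (-1 : ℝ) ^ j * ((Fintype.card Fq - 1 : ℕ) : ℝ) ^ (k - j)
              * ((db b p.1 p.2 * Fintype.card Fq ^ (b - 1)).choose j : ℝ)
              * ((n * (LPaux.Rset Fq hb).card
                  - db b p.1 p.2 * Fintype.card Fq ^ (b - 1)).choose (k - j) : ℝ))
          = ∑ j ∈ Finset.range (k + 1),
              (-1 : ℝ) ^ j * ((Fintype.card Fq - 1 : ℕ) : ℝ) ^ (k - j)
                * ((i * Fintype.card Fq ^ (b - 1)).choose j : ℝ)
                * ((n * (LPaux.Rset Fq hb).card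
                    - i * Fintype.card Fq ^ (b - 1)).choose (k - j) : ℝ))]
    rw [Finset.sum_const, nsmul_eq_mul]
  calc (0:ℝ)
      ≤ ∑ p ∈ C ×ˢ C, ∑ j ∈ Finset.range (k + 1),
          (-1 : ℝ) ^ j * ((Fintype.card Fq - 1 : ℕ) : ℝ) ^ (k - j)
            * ((db b p.1 p.2 * Fintype.card Fq ^ (b - 1)).choose j : ℝ)
            * ((n * (LPaux.Rset Fq hb).card
                - db b p.1 p.2 * Fintype.card Fq ^ (b - 1)).choose (k - j) : ℝ) :=
        LPaux.core_pos hb k C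
    _ = ∑ i ∈ Finset.range (n + 1),
          ∑ p ∈ (C ×ˢ C).filter (fun p => db b p.1 p.2 = i),
            ∑ j ∈ Finset.range (k + 1),
              (-1 : ℝ) ^ j * ((Fintype.card Fq - 1 : ℕ) : ℝ) ^ (k - j)
                * ((db b p.1 p.2 * Fintype.card Fq ^ (b - 1)).choose j : ℝ)
                * ((n * (LPaux.Rset Fq hb).card
                    - db b p.1 p.2 * Fintype.card Fq ^ (b - 1)).choose (k - j) : ℝ) :=
        hfib.symm
    _ = ∑ i ∈ Finset.range (n + 1),
          (((C ×ˢ C).filter fun p => db b p.1 p.2 = i).card : ℝ)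
            * (∑ j ∈ Finset.range (k + 1),
                (-1 : ℝ) ^ j * ((Fintype.card Fq - 1 : ℕ) : ℝ) ^ (k - j)
                  * ((i * Fintype.card Fq ^ (b - 1)).choose j : ℝ)
                  * ((n * (LPaux.Rset Fq hb).card
                      - i * Fintype.card Fq ^ (b - 1)).choose (k - j) : ℝ)) :=
        Finset.sum_congr rfl htrans
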